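/- Let X be a geodesic δ-hyperbolic space, [x,y] a geodesic segment from x to y, and γ a rectifiable path from x to y with length(γ) ≤ |xy| + ℓ. Then every point z of γ satisfies d(z,[x,y]) ≤ ℓ/2 + 8δ. -/
import Mathlib


open Metric Set

/-- Four-point condition for δ-hyperbolicity. -/
def FourPointHyp (X : Type*) [MetricSpace X] (δ : ℝ) : Prop :=
  ∀ x y z w : X,
    dist x y + dist z w ≤ max (dist x z + dist y w) (dist y z + dist x w) + 2 * δ

/-- `s` is a geodesic segment from `a` to `b`. -/
def IsGeodSegment {X : Type*} [MetricSpace X] (a b : X) (s : Set X) : Prop :=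
  ∃ f : ℝ → X, f 0 = a ∧ f (dist a b) = b ∧
    (∀ u ∈ Icc (0:ℝ) (dist a b), ∀ v ∈ Icc (0:ℝ) (dist a b),
      dist (f u) (f v) = |u - v|) ∧
    s = f '' Icc (0:ℝ) (dist a b)

/-- `X` is a geodesic space. -/
def IsGeodesicSpace (X : Type*) [MetricSpace X] : Prop :=
  ∀ a b : X, ∃ s : Set X, IsGeodSegment a b s

/-- In a geodesic δ-hyperbolic space, a path `γ` from `x` to `y` of length at most
`|xy| + ℓ` stays in the `(ℓ/2 + 8δ)`-neighborhood of a geodesic segment `[x,y]`. -/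
theorem stmt2 {X : Type*} [MetricSpace X] (δ ℓ : ℝ) (hδ : 0 ≤ δ) (hℓ : 0 ≤ ℓ)
    (hyp : FourPointHyp X δ) (hgeo : IsGeodesicSpace X)
    (x y : X) (s : Set X) (hs : IsGeodSegment x y s)
    (γ : ℝ → X) (hcont : ContinuousOn γ (Icc (0:ℝ) 1))
    (h0 : γ 0 = x) (h1 : γ 1 = y)
    (hlen : eVariationOn γ (Icc (0:ℝ) 1) ≤ ENNReal.ofReal (dist x y + ℓ)) :
    ∀ t ∈ Icc (0:ℝ) 1, infDist (γ t) s ≤ ℓ / 2 + 8 * δ := by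
  obtain ⟨f, hf0, hfL, hiso, hseq⟩ := hs
  intro t ht
  set z := γ t with hz
  set L : ℝ := dist x y with hL
  set a : ℝ := dist x z with ha
  set b : ℝ := dist y z with hb
  -- length bound gives a + b ≤ L + ℓ
  have hsplit : eVariationOn γ (Icc 0 t) + eVariationOn γ (Icc t 1) =
      eVariationOn γ (Icc (0:ℝ) 1) := by
    have := eVariationOn.Icc_add_Icc γ (s := univ) ht.1 ht.2 (mem_univ t)
    simpa only [univ_inter] using this
  have hea : ENNReal.ofReal a ≤ eVariationOn γ (Icc 0 t) := by
    have := eVariationOn.edist_le γ (show (0:ℝ) ∈ Icc 0 t from ⟨le_refl _, ht.1⟩)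
      (show t ∈ Icc 0 t from ⟨ht.1, le_refl _⟩)
    rw [edist_dist, h0] at this
    exact this
  have heb : ENNReal.ofReal b ≤ eVariationOn γ (Icc t 1) := by
    have := eVariationOn.edist_le γ (show (1:ℝ) ∈ Icc t 1 from ⟨ht.2, le_refl _⟩)
      (show t ∈ Icc t 1 from ⟨le_refl _, ht.2⟩)
    rw [edist_dist, h1] at this
    exact this
  have hab : a + b ≤ L + ℓ := by
    have h1' : ENNReal.ofReal (a + b) ≤ ENNReal.ofReal (L + ℓ) := by
      rw [ENNReal.ofReal_add dist_nonneg dist_nonneg]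
      calc ENNReal.ofReal a + ENNReal.ofReal b
          ≤ eVariationOn γ (Icc 0 t) + eVariationOn γ (Icc t 1) := add_le_add hea heb
        _ = eVariationOn γ (Icc (0:ℝ) 1) := hsplit
        _ ≤ ENNReal.ofReal (L + ℓ) := hlen
    exact (ENNReal.ofReal_le_ofReal_iff (by positivity)).mp h1'
  -- choose the point p = f u with u = (a - b + L)/2
  set u : ℝ := (a - b + L) / 2 with hu
  have hu0 : 0 ≤ u := by
    have : b ≤ a + L := by
      calc b = dist y z := rfl
        _ ≤ dist y x + dist x z := dist_triangle _ _ _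
        _ = a + L := by rw [dist_comm y x]; ring
    simp only [hu]; linarith
  have huL : u ≤ L := by
    have : a ≤ b + L := by
      calc a = dist x z := rfl
        _ ≤ dist x y + dist y z := dist_triangle _ _ _
        _ = b + L := by ring
    simp only [hu]; linarith
  have humem : u ∈ Icc (0:ℝ) L := ⟨hu0, huL⟩
  set p := f u with hp
  have hps : p ∈ s := by
    rw [hseq]; exact ⟨u, humem, rfl⟩
  have h0mem : (0:ℝ) ∈ Icc (0:ℝ) L := ⟨le_refl _, dist_nonneg⟩
  have hLmem : L ∈ Icc (0:ℝ) L := ⟨dist_nonneg, le_refl _⟩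
  have hxp : dist x p = u := by
    have := hiso 0 h0mem u humem
    rw [hf0] at this
    rw [this, abs_of_nonpos (by linarith)]; ring
  have hyp' : dist y p = L - u := by
    have := hiso L hLmem u humem
    rw [hfL] at this
    rw [this, abs_of_nonneg (by linarith)]
  -- apply the four-point condition to x, y, z, p
  have h4 := hyp x y z p
  have hmax : max (dist x z + dist y p) (dist y z + dist x p) = (a + b + L) / 2 := by
    rw [hxp, hyp', ← ha, ← hb]
    have e1 : a + (L - u) = (a + b + L) / 2 := by simp only [hu]; ring
    have e2 : b + u = (a + b + L) / 2 := by simp only [hu]; ring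
    rw [e1, e2, max_self]
  rw [hmax, ← hL] at h4
  have hzp : dist z p ≤ (a + b - L) / 2 + 2 * δ := by linarith
  calc infDist z s ≤ dist z p := infDist_le_dist_of_mem hps
    _ ≤ (a + b - L) / 2 + 2 * δ := hzp
    _ ≤ ℓ / 2 + 8 * δ := by linarith
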